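/- Let C ⊆ ℕ be a cohesive set and let L = (ℕ, ≺) be a computable linear order of order type ω (order-isomorphic to (ℕ, <)). Then the map sending each k ∈ ℕ to the equivalence class of the constant function with value k is an order embedding of L into the cohesive power Π_C L whose image is an initial segment of Π_C L; in particular, Π_C L has an initial segment of order type ω. -/

import Mathlib

/-- `X ⊆* Y`: `X` is contained in `Y` up to finitely many elements. -/
def AlmostSubset (X Y : Set ℕ) : Prop := (X \ Y).Finite

/-- `W ⊆ ℕ` is computably enumerable: it is the domain of a partial computable function. -/
def CESet (W : Set ℕ) : Prop := ∃ f : ℕ →. ℕ, Partrec f ∧ W = f.Dom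

/-- `W ⊆ ℕ` is computable (decidable). -/
def ComputableSet (W : Set ℕ) : Prop :=
  ∃ f : ℕ → Bool, Computable f ∧ ∀ n, n ∈ W ↔ f n = true

/-- `C ⊆ ℕ` is cohesive: `C` is infinite, and for every c.e. set `W`, either `W ∩ C`
or `Wᶜ ∩ C` is finite. -/
def Cohesive (C : Set ℕ) : Prop :=
  C.Infinite ∧ ∀ W : Set ℕ, CESet W → (W ∩ C).Finite ∨ (Wᶜ ∩ C).Finite

/-- `C ⊆ ℕ` is r-cohesive. -/
def RCohesive (C : Set ℕ) : Prop :=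
  C.Infinite ∧ ∀ W : Set ℕ, ComputableSet W → (W ∩ C).Finite ∨ (Wᶜ ∩ C).Finite

/-- `C` is co-maximal: its complement is maximal, i.e. `C` is cohesive with c.e. complement. -/
def CoMaximal (C : Set ℕ) : Prop := Cohesive C ∧ CESet Cᶜ

/-- A computable (decidable) binary relation on `ℕ`. -/
def ComputableRel (r : ℕ → ℕ → Prop) : Prop :=
  ∃ f : ℕ → ℕ → Bool, Computable₂ f ∧ ∀ m n, r m n ↔ f m n = true

/-- `y` is the immediate successor of `x` with respect to the strict order `r`. -/
def ImmSucc {α : Type*} (r : α → α → Prop) (x y : α) : Prop :=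
  r x y ∧ ∀ z, ¬(r x z ∧ r z y)

/-- A strict order on `ℕ` has order type ω when it is isomorphic to `(ℕ, <)`. -/
def OrderTypeOmega (r : ℕ → ℕ → Prop) : Prop :=
  Nonempty (r ≃r ((· < ·) : ℕ → ℕ → Prop))

/-- Carrier of the cohesive power: partial computable functions whose domain
almost contains `C`. -/
def CohCarrier (C : Set ℕ) : Type :=
  {φ : ℕ →. ℕ // Partrec φ ∧ (C \ φ.Dom).Finite}

/-- Two partial functions agree (are defined and equal) on almost all of `C`. -/
def eqAE (C : Set ℕ) (φ ψ : ℕ →. ℕ) : Prop :=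
  (C \ {n | ∃ a, a ∈ φ n ∧ a ∈ ψ n}).Finite

/-- The equivalence relation underlying the cohesive power. -/
def cohSetoid (C : Set ℕ) : Setoid (CohCarrier C) where
  r φ ψ := eqAE C φ.1 ψ.1
  iseqv := by
    constructor
    · intro φ
      refine φ.2.2.subset fun n hn => ⟨hn.1, fun hd => hn.2 ?_⟩
      obtain ⟨a, ha⟩ := (PFun.mem_dom _ _).mp hd
      exact ⟨a, ha, ha⟩
    · intro φ ψ h
      exact h.subset fun n hn => ⟨hn.1, fun ⟨a, h1, h2⟩ => hn.2 ⟨a, h2, h1⟩⟩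
    · intro φ ψ χ h1 h2
      refine (h1.union h2).subset fun n hn => ?_
      by_cases hmem : ∃ a, a ∈ φ.1 n ∧ a ∈ ψ.1 n
      · obtain ⟨a, ha1, ha2⟩ := hmem
        refine Or.inr ⟨hn.1, fun ⟨b, hb1, hb2⟩ => hn.2 ⟨a, ha1, ?_⟩⟩
        rwa [Part.mem_unique ha2 hb1]
      · exact Or.inl ⟨hn.1, hmem⟩

/-- The domain of the cohesive power of a computable structure on `ℕ` over `C`. -/
def CohPow (C : Set ℕ) : Type := Quotient (cohSetoid C)

/-- The class of a partial computable function in the cohesive power. -/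
def CohPow.mk {C : Set ℕ} (φ : CohCarrier C) : CohPow C := Quotient.mk (cohSetoid C) φ

/-- `φ(n) ≺ ψ(n)` (both defined) for almost all `n ∈ C`. -/
def ltAE (C : Set ℕ) (r : ℕ → ℕ → Prop) (φ ψ : ℕ →. ℕ) : Prop :=
  (C \ {n | ∃ a b, a ∈ φ n ∧ b ∈ ψ n ∧ r a b}).Finite

/-- The order of the cohesive power of the computable linear order `(ℕ, r)` over `C`. -/
def CohPow.Lt (C : Set ℕ) (r : ℕ → ℕ → Prop) (x y : CohPow C) : Prop :=
  ∃ φ ψ : CohCarrier C, x = CohPow.mk φ ∧ y = CohPow.mk ψ ∧ ltAE C r φ.1 ψ.1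

/-- The sum `L₀ + L₁` of two linear orders on `ℕ`, coded on `ℕ` via the computable
pairing `⟨0, l⟩ ↦ 2l`, `⟨1, l⟩ ↦ 2l + 1`. -/
def sumRel (r₀ r₁ : ℕ → ℕ → Prop) (m n : ℕ) : Prop :=
  (m % 2 = 0 ∧ n % 2 = 1) ∨
  (m % 2 = 0 ∧ n % 2 = 0 ∧ r₀ (m / 2) (n / 2)) ∨
  (m % 2 = 1 ∧ n % 2 = 1 ∧ r₁ (m / 2) (n / 2))

/-- The lexicographic product `L₀ ×ₗ L₁` (first coordinate dominant) of two linear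
orders on `ℕ`, coded on `ℕ` via the computable pairing `Nat.pair`. -/
def lexRel (r₀ r₁ : ℕ → ℕ → Prop) (m n : ℕ) : Prop :=
  r₀ m.unpair.1 n.unpair.1 ∨ (m.unpair.1 = n.unpair.1 ∧ r₁ m.unpair.2 n.unpair.2)

/-- The strict order of `ℕ + ℚ ×ₗ ℤ`. -/
def NQZlt : ℕ ⊕ ℚ × ℤ → ℕ ⊕ ℚ × ℤ → Prop :=
  Sum.Lex (· < ·) (Prod.Lex (· < ·) (· < ·))

/-- The element of the cohesive power represented by the constant function `k`. -/
def constElt (C : Set ℕ) (k : ℕ) : CohPow C :=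
  CohPow.mk ⟨fun _ => Part.some k, Partrec.const' (Part.some k), by
    have : (PFun.Dom fun _ : ℕ => Part.some k) = Set.univ := by
      ext n; simp [PFun.Dom]
    rw [this, Set.diff_univ]; exact Set.finite_empty⟩

/-- The element of the cohesive power represented by the identity function. -/
def idElt (C : Set ℕ) : CohPow C :=
  CohPow.mk ⟨fun n => Part.some n, Partrec.some, by
    have : (PFun.Dom fun n : ℕ => Part.some n) = Set.univ := by
      ext n; simp [PFun.Dom]
    rw [this, Set.diff_univ]; exact Set.finite_empty⟩

/-- The constant function `k` as an element of the carrier. -/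
def constCarrier (C : Set ℕ) (k : ℕ) : CohCarrier C :=
  ⟨fun _ => Part.some k, Partrec.const' (Part.some k), by
    have : (PFun.Dom fun _ : ℕ => Part.some k) = Set.univ := by
      ext n; simp [PFun.Dom]
    rw [this, Set.diff_univ]; exact Set.finite_empty⟩

lemma constElt_eq (C : Set ℕ) (k : ℕ) : constElt C k = CohPow.mk (constCarrier C k) := rfl

lemma mk_eq_mk {C : Set ℕ} {φ ψ : CohCarrier C} (h : CohPow.mk φ = CohPow.mk ψ) :
    eqAE C φ.1 ψ.1 := Quotient.exact h

lemma mk_eq_of_eqAE {C : Set ℕ} {φ ψ : CohCarrier C} (h : eqAE C φ.1 ψ.1) :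
    CohPow.mk φ = CohPow.mk ψ := Quotient.sound h

/-- The preimage of a value under a partial computable function is c.e. -/
lemma preimage_ce (φ : ℕ →. ℕ) (hφ : Partrec φ) (j : ℕ) :
    CESet {n | j ∈ φ n} := by
  refine ⟨fun n => (φ n).bind fun a => ((if a = j then some 0 else none : Option ℕ) : Part ℕ),
    ?_, ?_⟩
  · have hp : PrimrecPred (fun a : ℕ => a = j) :=
      Primrec.eq.comp Primrec.id (Primrec.const j)
    have hprim : Primrec (fun a : ℕ => (if a = j then some 0 else none : Option ℕ)) :=
      Primrec.ite hp (Primrec.const _) (Primrec.const _)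
    exact hφ.bind (Computable.ofOption (hprim.to_comp.comp Computable.snd))
  · ext n
    change j ∈ φ n ↔ ((φ n).bind fun a => ((if a = j then some 0 else none : Option ℕ) : Part ℕ)).Dom
    simp only [PFun.mem_dom, Set.mem_setOf_eq, Part.dom_iff_mem, Part.mem_bind_iff, Part.mem_ofOption]
    constructor
    · intro hj; exact ⟨0, j, hj, by simp⟩
    · rintro ⟨y, a, ha, hy⟩
      by_cases haj : a = j
      · exact haj ▸ ha
      · simp [haj] at hy

/-- For a computable linear order of type ω, the constant functions give an order
embedding of the order into its cohesive power whose image is an initial segment;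
in particular the cohesive power has an initial segment of type ω. -/
theorem constants_initial_segment (C : Set ℕ) (hC : Cohesive C)
    (r : ℕ → ℕ → Prop) (hcomp : ComputableRel r) (hsto : IsStrictTotalOrder ℕ r)
    (homega : OrderTypeOmega r) :
    (∀ k l : ℕ, r k l ↔ CohPow.Lt C r (constElt C k) (constElt C l)) ∧
    Function.Injective (constElt C) ∧
    (∀ (x : CohPow C) (k : ℕ), CohPow.Lt C r x (constElt C k) → ∃ j : ℕ, x = constElt C j) := by
  obtain ⟨e⟩ := homega
  have hfin : ∀ k : ℕ, {j : ℕ | r j k}.Finite := by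
    intro k
    have hsub : {j : ℕ | r j k} ⊆ e ⁻¹' (Set.Iio (e k)) := by
      intro j hj
      simpa [Set.mem_preimage, Set.mem_Iio, e.map_rel_iff] using hj
    exact ((Set.finite_Iio (e k)).preimage e.injective.injOn).subset hsub
  refine ⟨?_, ?_, ?_⟩
  · intro k l
    constructor
    · intro hr
      refine ⟨constCarrier C k, constCarrier C l, rfl, rfl, ?_⟩
      have : {n : ℕ | ∃ a b, a ∈ (constCarrier C k).1 n ∧ b ∈ (constCarrier C l).1 n ∧ r a b}
          = Set.univ := by
        ext n
        simp only [Set.mem_univ, iff_true, Set.mem_setOf_eq]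
        exact ⟨k, l, by simp [constCarrier], by simp [constCarrier], hr⟩
      unfold ltAE
      rw [this, Set.diff_univ]; exact Set.finite_empty
    · rintro ⟨φ, ψ, hφ, hψ, hlt⟩
      rw [constElt_eq] at hφ hψ
      have h1 := mk_eq_mk hφ.symm
      have h2 := mk_eq_mk hψ.symm
      have hne : (C \ (((C \ _) ∪ (C \ _)) ∪ (C \ _))).Nonempty :=
        (hC.1.diff ((h1.union h2).union hlt)).nonempty
      obtain ⟨n, hnC, hn⟩ := hne
      simp only [Set.mem_union, not_or, Set.mem_diff, not_and, not_not] at hn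
      obtain ⟨⟨hk, hl⟩, hrl⟩ := hn
      obtain ⟨a, ha1, ha2⟩ := hk hnC
      obtain ⟨b, hb1, hb2⟩ := hl hnC
      obtain ⟨a', b', ha', hb', hr⟩ := hrl hnC
      have hak : a = k := by simpa [constCarrier] using ha2
      have hbl : b = l := by simpa [constCarrier] using hb2
      have : a' = a := Part.mem_unique ha' ha1
      have hb'b : b' = b := Part.mem_unique hb' hb1
      rwa [this, hb'b, hak, hbl] at hr
  · intro k l hkl
    rw [constElt_eq, constElt_eq] at hkl
    have h := mk_eq_mk hkl
    obtain ⟨n, hnC, hn⟩ := (hC.1.diff h).nonempty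
    have : ∃ a, a ∈ (constCarrier C k).1 n ∧ a ∈ (constCarrier C l).1 n := by
      by_contra hcon
      exact hn ⟨hnC, hcon⟩
    obtain ⟨a, ha1, ha2⟩ := this
    have h1 : a = k := by simpa [constCarrier] using ha1
    have h2 : a = l := by simpa [constCarrier] using ha2
    rw [← h1, h2]
  · rintro x k ⟨φ, ψ, hx, hψ, hlt⟩
    rw [constElt_eq] at hψ
    have h2 := mk_eq_mk hψ
    -- almost all n in C : φ(n) is defined and r (φ n) k
    have hgood : (C \ {n | ∃ a, a ∈ φ.1 n ∧ r a k}).Finite := by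
      refine (hlt.union h2).subset ?_
      rintro n ⟨hnC, hn⟩
      by_cases hA : ∃ a b, a ∈ φ.1 n ∧ b ∈ ψ.1 n ∧ r a b
      · obtain ⟨a, b, ha, hb, hr⟩ := hA
        refine Or.inr ⟨hnC, fun ⟨c, hc1, hc2⟩ => hn ⟨a, ha, ?_⟩⟩
        have hbk : b = k := by
          have hbc : b = c := Part.mem_unique hb hc2
          have hck : c = k := by simpa [constCarrier] using hc1
          rw [hbc, hck]
        rwa [hbk] at hr
      · exact Or.inl ⟨hnC, hA⟩
    set S : Set ℕ := {j : ℕ | r j k} with hS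
    by_cases hcase : ∃ j ∈ S, ({n : ℕ | j ∈ φ.1 n}ᶜ ∩ C).Finite
    · obtain ⟨j, _, hj⟩ := hcase
      refine ⟨j, ?_⟩
      rw [hx, constElt_eq]
      refine mk_eq_of_eqAE (hj.subset ?_)
      rintro n ⟨hnC, hn⟩
      refine ⟨fun hmem => hn ⟨j, hmem, ?_⟩, hnC⟩
      simp [constCarrier]
    · exfalso
      push_neg at hcase
      have hall : ∀ j ∈ S, ({n : ℕ | j ∈ φ.1 n} ∩ C).Finite := by
        intro j hj
        rcases hC.2 _ (preimage_ce φ.1 φ.2.1 j) with h | h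
        · exact h
        · exact absurd h (hcase j hj)
      have hbU : (⋃ j ∈ S, ({n : ℕ | j ∈ φ.1 n} ∩ C)).Finite :=
        Set.Finite.biUnion (hfin k) hall
      have hCsub : C ⊆ (C \ {n | ∃ a, a ∈ φ.1 n ∧ r a k}) ∪ ⋃ j ∈ S, ({n : ℕ | j ∈ φ.1 n} ∩ C) := by
        intro n hnC
        by_cases hn : ∃ a, a ∈ φ.1 n ∧ r a k
        · obtain ⟨a, ha, hr⟩ := hn
          exact Or.inr (Set.mem_biUnion hr ⟨ha, hnC⟩)
        · exact Or.inl ⟨hnC, hn⟩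
      exact hC.1 ((hgood.union hbU).subset hCsub)
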